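/- Let (λᵏ, r_k) ∈ ℝᵐ × (0, ∞), let (x^{k+1}, t_{k+1}) ∈ A(λᵏ, r_k) with t_{k+1} > 0, and set λ^{k+1} = λᵏ + (r_k/t_{k+1}) h(x^{k+1}) and r_{k+1} = 2 r_k. If A(λ^{k+1}, r_{k+1}) is nonempty, then q̃(λ^{k+1}, r_{k+1}) ≥ q̃(λᵏ, r_k); moreover, if (λᵏ, r_k) is not an optimal dual solution and the element of A(λ^{k+1}, r_{k+1}) has second coordinate zero, then the inequality is strict. -/

import Mathlib

noncomputable section

open Classical in
/-- The extended-real-valued smoothing function `L̃_{λ,r}(x,t)`. -/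
def Ltilde {n m : ℕ} (f : EuclideanSpace ℝ (Fin n) → ℝ)
    (h : EuclideanSpace ℝ (Fin n) → EuclideanSpace ℝ (Fin m))
    (lam : EuclideanSpace ℝ (Fin m)) (r : ℝ)
    (x : EuclideanSpace ℝ (Fin n)) (t : ℝ) : EReal :=
  if 0 < t then
    (((f x + (inner ℝ lam (h x) : ℝ) + r / (2 * t) * ‖h x‖ ^ 2 + r / 2 * t) : ℝ) : EReal)
  else if t = 0 ∧ h x = 0 then ((f x : ℝ) : EReal)
  else ⊤

/-- The augmented dual function `q̃(λ, r) = inf_{(x,t)} L̃_{λ,r}(x,t)`. -/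
def qtilde {n m : ℕ} (f : EuclideanSpace ℝ (Fin n) → ℝ)
    (h : EuclideanSpace ℝ (Fin n) → EuclideanSpace ℝ (Fin m))
    (lam : EuclideanSpace ℝ (Fin m)) (r : ℝ) : EReal :=
  ⨅ p : EuclideanSpace ℝ (Fin n) × ℝ, Ltilde f h lam r p.1 p.2

/-- The set `A(λ, r)` of global minimizers of `L̃_{λ,r}`. -/
def Aset {n m : ℕ} (f : EuclideanSpace ℝ (Fin n) → ℝ)
    (h : EuclideanSpace ℝ (Fin n) → EuclideanSpace ℝ (Fin m))
    (lam : EuclideanSpace ℝ (Fin m)) (r : ℝ) :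
    Set (EuclideanSpace ℝ (Fin n) × ℝ) :=
  {p | Ltilde f h lam r p.1 p.2 = qtilde f h lam r}

lemma qtilde_le {n m : ℕ} (f : EuclideanSpace ℝ (Fin n) → ℝ)
    (h : EuclideanSpace ℝ (Fin n) → EuclideanSpace ℝ (Fin m))
    (lam : EuclideanSpace ℝ (Fin m)) (r : ℝ)
    (x : EuclideanSpace ℝ (Fin n)) (t : ℝ) :
    qtilde f h lam r ≤ Ltilde f h lam r x t :=
  iInf_le _ ((x, t) : EuclideanSpace ℝ (Fin n) × ℝ)

/-- one step of the modified subgradient update does not decrease the dual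
function; if moreover `(λᵏ, r_k)` is not an optimal dual solution and the element of
`A(λ^{k+1}, r_{k+1})` has second coordinate zero, the increase is strict. -/
theorem stmt5 {n m : ℕ} (f : EuclideanSpace ℝ (Fin n) → ℝ)
    (h : EuclideanSpace ℝ (Fin n) → EuclideanSpace ℝ (Fin m))
    (hf : ContDiff ℝ 2 f) (hh : ContDiff ℝ 2 h)
    (lamk : EuclideanSpace ℝ (Fin m)) (rk : ℝ) (hrk : 0 < rk)
    (x1 : EuclideanSpace ℝ (Fin n)) (t1 : ℝ) (ht1 : 0 < t1)
    (hmem : (x1, t1) ∈ Aset f h lamk rk)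
    (lam1 : EuclideanSpace ℝ (Fin m)) (r1 : ℝ)
    (hlam1 : lam1 = lamk + (rk / t1) • h x1) (hr1 : r1 = 2 * rk)
    (hAne : (Aset f h lam1 r1).Nonempty) :
    qtilde f h lamk rk ≤ qtilde f h lam1 r1 ∧
    ((¬ ∀ (lam : EuclideanSpace ℝ (Fin m)) (r : ℝ), 0 < r →
        qtilde f h lam r ≤ qtilde f h lamk rk) →
      (∃ p ∈ Aset f h lam1 r1, p.2 = (0 : ℝ)) →
      qtilde f h lamk rk < qtilde f h lam1 r1) := by
  have hmem' : Ltilde f h lamk rk x1 t1 = qtilde f h lamk rk := hmem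
  -- Step 1 : ‖h x1‖ ≤ t1
  have hnorm : ‖h x1‖ ≤ t1 := by
    by_cases hz : h x1 = 0
    · simp [hz]; exact ht1.le
    · set a := ‖h x1‖ with ha
      have hapos : 0 < a := norm_pos_iff.mpr hz
      have hle : Ltilde f h lamk rk x1 t1 ≤ Ltilde f h lamk rk x1 a := by
        rw [hmem']; exact qtilde_le f h lamk rk x1 a
      rw [Ltilde, Ltilde, if_pos ht1, if_pos hapos, EReal.coe_le_coe_iff] at hle
      rw [← ha] at hle
      have hane : (a : ℝ) ≠ 0 := ne_of_gt hapos
      have ht1ne : (t1 : ℝ) ≠ 0 := ne_of_gt ht1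
      have e1 : rk / (2 * a) * a ^ 2 + rk / 2 * a = rk * a := by field_simp; ring
      have e2 : rk / (2 * t1) * a ^ 2 + rk / 2 * t1 - rk * a
          = rk * (a - t1) ^ 2 / (2 * t1) := by field_simp; ring
      have h3 : rk * (a - t1) ^ 2 / (2 * t1) ≤ 0 := by linarith
      have h4 : 0 ≤ rk * (a - t1) ^ 2 / (2 * t1) := by positivity
      have h6 : rk * (a - t1) ^ 2 / (2 * t1) = 0 := le_antisymm h3 h4
      have h7 : (a - t1) ^ 2 = 0 := by
        rcases div_eq_zero_iff.mp h6 with h6' | h6'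
        · rcases mul_eq_zero.mp h6' with h9 | h9
          · exact absurd h9 (ne_of_gt hrk)
          · exact h9
        · exact absurd h6' (by positivity)
      have h8 : a = t1 := by nlinarith [sq_nonneg (a - t1)]
      exact le_of_eq h8
  -- Pointwise comparison of the two Lagrangians
  have hpw : ∀ x t, Ltilde f h lamk rk x t ≤ Ltilde f h lam1 r1 x t := by
    intro x t
    by_cases hpos : 0 < t
    · rw [Ltilde, Ltilde, if_pos hpos, if_pos hpos, EReal.coe_le_coe_iff]
      rw [hlam1, hr1]
      rw [inner_add_left, real_inner_smul_left]
      have hcs : -(‖h x1‖ * ‖h x‖) ≤ (inner ℝ (h x1) (h x) : ℝ) :=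
        neg_le_of_abs_le (abs_real_inner_le_norm _ _)
      have hnn : (0 : ℝ) ≤ ‖h x‖ := norm_nonneg _
      have key : (0 : ℝ) ≤ rk / t1 * (inner ℝ (h x1) (h x) : ℝ)
          + rk / (2 * t) * ‖h x‖ ^ 2 + rk / 2 * t := by
        have h1 : rk / t1 * (-(t1 * ‖h x‖)) ≤ rk / t1 * (inner ℝ (h x1) (h x) : ℝ) := by
          apply mul_le_mul_of_nonneg_left _ (le_of_lt (div_pos hrk ht1))
          have : -(t1 * ‖h x‖) ≤ -(‖h x1‖ * ‖h x‖) := by nlinarith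
          linarith
        have h2 : rk / t1 * (-(t1 * ‖h x‖)) = -(rk * ‖h x‖) := by
          field_simp
        have h3 : rk * ‖h x‖ ≤ rk / (2 * t) * ‖h x‖ ^ 2 + rk / 2 * t := by
          rw [div_mul_eq_mul_div, div_add' _ _ _ (by positivity : (2 * t : ℝ) ≠ 0),
            le_div_iff₀ (by positivity : (0 : ℝ) < 2 * t)]
          nlinarith [sq_nonneg (‖h x‖ - t), hrk.le]
        linarith
      have e1 : 2 * rk / (2 * t) * ‖h x‖ ^ 2
          = rk / (2 * t) * ‖h x‖ ^ 2 + rk / (2 * t) * ‖h x‖ ^ 2 := by ring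
      have e2 : 2 * rk / 2 * t = rk / 2 * t + rk / 2 * t := by ring
      linarith
    · rw [Ltilde, Ltilde, if_neg hpos, if_neg hpos]
  refine ⟨le_iInf fun p => (qtilde_le f h lamk rk p.1 p.2).trans (hpw p.1 p.2), ?_⟩
  -- Strict part
  intro hnotopt hex
  obtain ⟨p, hp, hp2⟩ := hex
  have hp' : Ltilde f h lam1 r1 p.1 p.2 = qtilde f h lam1 r1 := hp
  -- q̃(λ1,r1) < ⊤
  have hfin : qtilde f h lam1 r1 < ⊤ := by
    refine lt_of_le_of_lt (qtilde_le f h lam1 r1 x1 t1) ?_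
    rw [Ltilde, if_pos ht1]
    exact EReal.coe_lt_top _
  -- h p.1 = 0
  have hz : h p.1 = 0 := by
    by_contra hznz
    rw [hp2] at hp'
    rw [Ltilde, if_neg (lt_irrefl 0), if_neg (by tauto)] at hp'
    rw [← hp'] at hfin
    exact lt_irrefl _ hfin
  have hval : qtilde f h lam1 r1 = ((f p.1 : ℝ) : EReal) := by
    rw [← hp', hp2, Ltilde, if_neg (lt_irrefl 0), if_pos ⟨rfl, hz⟩]
  push_neg at hnotopt
  obtain ⟨lam, r, hr, hq⟩ := hnotopt
  have : qtilde f h lam r ≤ ((f p.1 : ℝ) : EReal) := by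
    refine (qtilde_le f h lam r p.1 0).trans_eq ?_
    rw [Ltilde, if_neg (lt_irrefl 0), if_pos ⟨rfl, hz⟩]
  rw [hval]
  exact lt_of_lt_of_le hq this
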